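/- Let (T, 𝒜, p) and (X, ℬ, m) be probability spaces, S = [0,1] with Lebesgue measure ρ, g: S × T → T a measurable random map such that p is g-stationary in the sense that ∫ (g_s)_*p dρ(s) = p (equivalently p = ∫ Q(r, ·) dp(r) for Q(r, A) = ρ({s : g_s(r) ∈ A})), and f: T × X → X fibered (p,m)-nonsingular, i.e., (f_t)_*m ≪ m for p-a.e. t. Define h: S × (T × X) → T × X by h_s(t,x) = (g_s(t), f_{g_s(t)}(x)) and the skew-product H(ζ, (t,x)) = (σζ, h_{ζ₀}(t,x)) on Σ × (T × X) with Σ = S^ℕ, ν = ρ^ℕ. Then H is (ν × p × m)-nonsingular: if (ν × p × m)(A) = 0 then (H_*(ν × p × m))(A) = 0. -/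

import Mathlib

open MeasureTheory unitInterval Set

section auxCyl

variable {Y : Type*} [MeasurableSpace Y]

/-- Restriction to the first `n` coordinates. -/
def restrN (Y : Type*) (n : ℕ) : (ℕ → Y) → (Fin n → Y) := fun ξ i => ξ i

lemma measurable_restrN (n : ℕ) : Measurable (restrN Y n) :=
  measurable_pi_lambda _ fun i => measurable_pi_apply _

/-- finite-dimensional cylinders -/
def cylE (Y : Type*) [MeasurableSpace Y] : Set (Set (ℕ → Y)) :=
  {C | ∃ (n : ℕ) (B : Set (Fin n → Y)), MeasurableSet B ∧ C = restrN Y n ⁻¹' B}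

lemma restrN_lift {n k : ℕ} (h : n ≤ k) (B : Set (Fin n → Y)) :
    restrN Y n ⁻¹' B = restrN Y k ⁻¹' ((fun y (i : Fin n) => y (Fin.castLE h i)) ⁻¹' B) := rfl

lemma isPiSystem_cylE : IsPiSystem (cylE Y) := by
  rintro C₁ ⟨n, B₁, hB₁, rfl⟩ C₂ ⟨k, B₂, hB₂, rfl⟩ -
  have m₁ : Measurable fun (y : Fin (max n k) → Y) (i : Fin n) => y (Fin.castLE (le_max_left n k) i) :=
    measurable_pi_lambda _ fun i => measurable_pi_apply _
  have m₂ : Measurable fun (y : Fin (max n k) → Y) (i : Fin k) => y (Fin.castLE (le_max_right n k) i) :=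
    measurable_pi_lambda _ fun i => measurable_pi_apply _
  refine ⟨max n k, _ ⁻¹' B₁ ∩ _ ⁻¹' B₂, (m₁ hB₁).inter (m₂ hB₂), ?_⟩
  rw [restrN_lift (le_max_left n k) B₁, restrN_lift (le_max_right n k) B₂, Set.preimage_inter]

lemma generateFrom_cylE :
    (inferInstance : MeasurableSpace (ℕ → Y)) = MeasurableSpace.generateFrom (cylE Y) := by
  apply le_antisymm
  · refine iSup_le fun i => ?_
    refine measurable_iff_comap_le.mp ?_
    intro A hA
    refine MeasurableSpace.measurableSet_generateFrom ?_
    exact ⟨i + 1, {y : Fin (i + 1) → Y | y ⟨i, Nat.lt_succ_self i⟩ ∈ A},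
      (measurable_pi_apply _) hA, rfl⟩
  · refine MeasurableSpace.generateFrom_le ?_
    rintro C ⟨n, B, hB, rfl⟩
    exact (measurable_restrN n) hB

lemma eq_of_cylE {μ₁ μ₂ : Measure (ℕ → Y)} [IsFiniteMeasure μ₁] [IsFiniteMeasure μ₂]
    (h : ∀ (n : ℕ) (B : Set (Fin n → Y)), MeasurableSet B →
      μ₁ (restrN Y n ⁻¹' B) = μ₂ (restrN Y n ⁻¹' B)) : μ₁ = μ₂ := by
  refine ext_of_generate_finite (cylE Y) generateFrom_cylE isPiSystem_cylE ?_ ?_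
  · rintro C ⟨n, B, hB, rfl⟩; exact h n B hB
  · simpa using h 0 Set.univ MeasurableSet.univ

end auxCyl

/-- If `p` is stationary for the random map `g : I × T → T` and `f` is fibered
(p,m)-nonsingular, then the skew product `H(ζ,(t,x)) = (σζ, (g_{ζ₀} t, f_{g_{ζ₀} t} x))`
is `(ν × p × m)`-nonsingular, where `ν` is the product over ℕ of Lebesgue measure on
the unit interval `I = [0,1]` (characterized by its finite marginals). -/
theorem stmt14 {T X : Type*} [MeasurableSpace T] [MeasurableSpace X]
    (p : Measure T) [IsProbabilityMeasure p] (m : Measure X) [IsProbabilityMeasure m]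
    (g : I → T → T) (hg : Measurable (Function.uncurry g))
    (hstat : ∀ A : Set T, MeasurableSet A →
      ∫⁻ s : I, Measure.map (g s) p A = p A)
    (f : T → X → X) (hf : Measurable (Function.uncurry f))
    (hfib : ∀ᵐ t ∂p, Measure.map (f t) m ≪ m)
    (ν : Measure (ℕ → I)) [IsProbabilityMeasure ν]
    (hν : ∀ n : ℕ, Measure.map (fun ξ (i : Fin n) => ξ i) ν
      = Measure.pi (fun _ : Fin n => (volume : Measure I))) :
    Measure.map
      (fun q : (ℕ → I) × (T × X) =>
        ((fun i => q.1 (i + 1)), (g (q.1 0) q.2.1, f (g (q.1 0) q.2.1) q.2.2)))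
      (ν.prod (p.prod m)) ≪ ν.prod (p.prod m) := by
  have hνr : ∀ n : ℕ, Measure.map (restrN I n) ν
      = Measure.pi (fun _ : Fin n => (volume : Measure I)) := hν
  have hgs : ∀ s, Measurable (g s) := fun s => hg.comp measurable_prodMk_left
  have hfs : ∀ t, Measurable (f t) := fun t => hf.comp measurable_prodMk_left
  -- shift map and splitting map
  set σf : (ℕ → I) → (ℕ → I) := fun ξ i => ξ (i + 1) with hσf
  have mσ : Measurable σf := measurable_pi_lambda _ fun i => measurable_pi_apply _
  have me₀ : Measurable (fun ξ : ℕ → I => (ξ 0, σf ξ)) :=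
    (measurable_pi_apply 0).prodMk mσ
  -- the splitting identity: ν = volume ⊗ ν under ξ ↦ (ξ 0, σ ξ)
  have hsplit : Measure.map (fun ξ : ℕ → I => (ξ 0, σf ξ)) ν
      = (volume : Measure I).prod ν := by
    refine (Measure.prod_eq ?_).symm
    intro s t hs ht
    rw [Measure.map_apply me₀ (hs.prod ht)]
    have hre : (fun ξ : ℕ → I => (ξ 0, σf ξ)) ⁻¹' (s ×ˢ t)
        = σf ⁻¹' t ∩ ((fun ξ : ℕ → I => ξ 0) ⁻¹' s) := by
      ext ξ; simp [and_comm]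
    rw [hre, ← Measure.restrict_apply (mσ ht), ← Measure.map_apply mσ ht]
    have hκ : Measure.map σf (ν.restrict ((fun ξ : ℕ → I => ξ 0) ⁻¹' s))
        = (volume s) • ν := by
      have inst2 : IsFiniteMeasure ((volume s) • ν) := by
        refine ⟨?_⟩
        rw [Measure.smul_apply, smul_eq_mul, measure_univ, mul_one]
        exact lt_of_le_of_lt (measure_mono (subset_univ s)) (measure_lt_top _ _)
      refine eq_of_cylE ?_
      intro n B hB
      have hrB : MeasurableSet (restrN I n ⁻¹' B) := (measurable_restrN n) hB
      have e := MeasurableEquiv.piFinSuccAbove (fun _ : Fin (n + 1) => I) 0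
      have hB' : MeasurableSet
          ((MeasurableEquiv.piFinSuccAbove (fun _ : Fin (n + 1) => I) 0) ⁻¹' (s ×ˢ B)) :=
        (MeasurableEquiv.piFinSuccAbove (fun _ : Fin (n + 1) => I) 0).measurable (hs.prod hB)
      have hset : σf ⁻¹' (restrN I n ⁻¹' B) ∩ ((fun ξ : ℕ → I => ξ 0) ⁻¹' s)
          = restrN I (n + 1) ⁻¹'
            ((MeasurableEquiv.piFinSuccAbove (fun _ : Fin (n + 1) => I) 0) ⁻¹' (s ×ˢ B)) := by
        ext ξ
        simp only [Set.mem_inter_iff, Set.mem_preimage, MeasurableEquiv.piFinSuccAbove_apply,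
          Set.mem_prod, Fin.removeNth, Fin.zero_succAbove, restrN, and_comm]
        rfl
      rw [Measure.map_apply mσ hrB, Measure.restrict_apply (mσ hrB), hset,
        ← Measure.map_apply (measurable_restrN (n + 1)) hB', hνr (n + 1),
        (measurePreserving_piFinSuccAbove (fun _ : Fin (n + 1) => (volume : Measure I)) 0).measure_preimage
          (hs.prod hB).nullMeasurableSet,
        Measure.prod_prod, Measure.smul_apply, smul_eq_mul,
        ← Measure.map_apply (measurable_restrN n) hB, hνr n]
    rw [hκ, Measure.smul_apply, smul_eq_mul]
  -- stationarity as a map identity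
  have hstat' : Measure.map (Function.uncurry g) ((volume : Measure I).prod p) = p := by
    ext A hA
    rw [Measure.map_apply hg hA, Measure.prod_apply (hg hA), ← hstat A hA]
    refine lintegral_congr fun s => ?_
    rw [Measure.map_apply (hgs s) hA]
    rfl
  -- the fibered map F'
  set F' : T × X → T × X := fun q => (q.1, f q.1 q.2) with hF'def
  have hF' : Measurable F' := measurable_fst.prodMk hf
  have hFac : Measure.map F' (p.prod m) ≪ p.prod m := by
    refine Measure.AbsolutelyContinuous.mk fun B hB h0 => ?_
    rw [Measure.map_apply hF' hB, Measure.prod_apply (hF' hB)]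
    have h0' := Measure.measure_ae_null_of_prod_null h0
    rw [lintegral_eq_zero_iff (measurable_measure_prodMk_left (hF' hB))]
    filter_upwards [h0', hfib] with t ht hac
    have hsec : Prod.mk t ⁻¹' (F' ⁻¹' B) = f t ⁻¹' (Prod.mk t ⁻¹' B) := rfl
    have : Measure.map (f t) m (Prod.mk t ⁻¹' B) = 0 := hac ht
    rw [Measure.map_apply (hfs t) (measurable_prodMk_left hB)] at this
    simpa [hsec] using this
  -- assemble everything through measure-preserving maps
  set μ := ν.prod (p.prod m) with hμ
  have mp₁ : MeasurePreserving (Prod.map (fun ξ : ℕ → I => (ξ 0, σf ξ)) (id : T × X → T × X))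
      μ (((volume : Measure I).prod ν).prod (p.prod m)) :=
    (⟨me₀, hsplit⟩ : MeasurePreserving _ ν ((volume : Measure I).prod ν)).prod
      (MeasurePreserving.id _)
  have mp₂ : MeasurePreserving (Prod.map (Prod.swap : I × (ℕ → I) → (ℕ → I) × I)
      (id : T × X → T × X)) (((volume : Measure I).prod ν).prod (p.prod m))
      ((ν.prod (volume : Measure I)).prod (p.prod m)) :=
    (⟨measurable_swap, Measure.prod_swap⟩ :
      MeasurePreserving _ ((volume : Measure I).prod ν) (ν.prod volume)).prod
      (MeasurePreserving.id _)
  have mp₃ : MeasurePreserving (MeasurableEquiv.prodAssoc :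
      ((ℕ → I) × I) × (T × X) ≃ᵐ (ℕ → I) × I × (T × X))
      ((ν.prod (volume : Measure I)).prod (p.prod m))
      (ν.prod ((volume : Measure I).prod (p.prod m))) :=
    measurePreserving_prodAssoc ν volume (p.prod m)
  have mp₄ : MeasurePreserving (Prod.map (id : (ℕ → I) → (ℕ → I))
      ((MeasurableEquiv.prodAssoc : (I × T) × X ≃ᵐ I × T × X).symm))
      (ν.prod ((volume : Measure I).prod (p.prod m)))
      (ν.prod (((volume : Measure I).prod p).prod m)) :=
    (MeasurePreserving.id _).prod ((measurePreserving_prodAssoc volume p m).symm _)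
  have mp₅ : MeasurePreserving (Prod.map (id : (ℕ → I) → (ℕ → I))
      (Prod.map (Function.uncurry g) (id : X → X)))
      (ν.prod (((volume : Measure I).prod p).prod m)) μ :=
    (MeasurePreserving.id _).prod
      ((⟨hg, hstat'⟩ : MeasurePreserving _ ((volume : Measure I).prod p) p).prod
        (MeasurePreserving.id _))
  have total := mp₅.comp (mp₄.comp (mp₃.comp (mp₂.comp mp₁)))
  have key : Measure.map
      (fun q : (ℕ → I) × (T × X) =>
        ((fun i => q.1 (i + 1)), (g (q.1 0) q.2.1, f (g (q.1 0) q.2.1) q.2.2))) μ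
      = ν.prod (Measure.map F' (p.prod m)) := by
    have hfun : (fun q : (ℕ → I) × (T × X) =>
        ((fun i => q.1 (i + 1)), (g (q.1 0) q.2.1, f (g (q.1 0) q.2.1) q.2.2)))
        = (Prod.map (id : (ℕ → I) → (ℕ → I)) F') ∘
          ((Prod.map (id : (ℕ → I) → (ℕ → I)) (Prod.map (Function.uncurry g) (id : X → X))) ∘
           ((Prod.map (id : (ℕ → I) → (ℕ → I))
              ((MeasurableEquiv.prodAssoc : (I × T) × X ≃ᵐ I × T × X).symm)) ∘
            ((MeasurableEquiv.prodAssoc :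
              ((ℕ → I) × I) × (T × X) ≃ᵐ (ℕ → I) × I × (T × X)) ∘
             ((Prod.map (Prod.swap : I × (ℕ → I) → (ℕ → I) × I) (id : T × X → T × X)) ∘
              (Prod.map (fun ξ : ℕ → I => (ξ 0, σf ξ)) (id : T × X → T × X)))))) := rfl
    rw [hfun, ← Measure.map_map (measurable_id.prodMap hF') total.measurable, total.map_eq,
      ← Measure.map_prod_map _ _ measurable_id hF', Measure.map_id]
  rw [key]
  have : IsProbabilityMeasure (Measure.map F' (p.prod m)) :=
    Measure.isProbabilityMeasure_map hF'.aemeasurable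
  exact (Measure.AbsolutelyContinuous.refl ν).prod hFac
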